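/- arXiv:1203.5168 — 2 statements merged into one kernel-verified Lean document; each statement's English description precedes it below -/
import Mathlib

section
/- Let (λ, μ, M, m) be an exact context. If λ: R → S or μ: R → T is a ring epimorphism, then the map γ: S ⊗_R T → M defined by s ⊗ t ↦ smt is an isomorphism of (S,T)-bimodules; in particular (λ, μ) is an exact pair. -/
open MulOpposite
open scoped TensorProduct

universe u

/-- Tensor product over `R` of a right `R`-module and a left `R`-module. -/
noncomputable abbrev tensorOver (R : Type u) [Ring R] {A B : Type u}
    [AddCommGroup A] [AddCommGroup B]
    (ract : A → R → A) (lact : R → B → B) : Type u :=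
  (TensorProduct ℤ A B) ⧸
    AddSubgroup.closure {x : TensorProduct ℤ A B |
      ∃ (a : A) (r : R) (b : B), x = (ract a r) ⊗ₜ[ℤ] b - a ⊗ₜ[ℤ] (lact r b)}

/-- The class of the elementary tensor `a ⊗ b`. -/
noncomputable def tensorOver.mk (R : Type u) [Ring R] {A B : Type u}
    [AddCommGroup A] [AddCommGroup B]
    (ract : A → R → A) (lact : R → B → B) (a : A) (b : B) : tensorOver R ract lact :=
  QuotientAddGroup.mk (a ⊗ₜ[ℤ] b)

section API
variable {R : Type u} [Ring R] {A B : Type u} [AddCommGroup A] [AddCommGroup B]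
  {ract : A → R → A} {lact : R → B → B}

lemma tensorOver.mk_add_left (a a' : A) (b : B) :
    tensorOver.mk R ract lact (a + a') b
      = tensorOver.mk R ract lact a b + tensorOver.mk R ract lact a' b := by
  show QuotientAddGroup.mk _ = QuotientAddGroup.mk _ + QuotientAddGroup.mk _
  rw [← QuotientAddGroup.mk_add, TensorProduct.add_tmul]

lemma tensorOver.mk_add_right (a : A) (b b' : B) :
    tensorOver.mk R ract lact a (b + b')
      = tensorOver.mk R ract lact a b + tensorOver.mk R ract lact a b' := by
  show QuotientAddGroup.mk _ = QuotientAddGroup.mk _ + QuotientAddGroup.mk _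
  rw [← QuotientAddGroup.mk_add, TensorProduct.tmul_add]

lemma tensorOver.mk_zero_left (b : B) : tensorOver.mk R ract lact (0 : A) b = 0 := by
  show QuotientAddGroup.mk _ = _
  rw [TensorProduct.zero_tmul]; rfl

lemma tensorOver.mk_zero_right (a : A) : tensorOver.mk R ract lact a (0 : B) = 0 := by
  show QuotientAddGroup.mk _ = _
  rw [TensorProduct.tmul_zero]; rfl

lemma tensorOver.mk_neg_left (a : A) (b : B) :
    tensorOver.mk R ract lact (-a) b = - tensorOver.mk R ract lact a b := by
  show QuotientAddGroup.mk _ = - QuotientAddGroup.mk _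
  rw [← QuotientAddGroup.mk_neg, TensorProduct.neg_tmul]

lemma tensorOver.mk_neg_right (a : A) (b : B) :
    tensorOver.mk R ract lact a (-b) = - tensorOver.mk R ract lact a b := by
  show QuotientAddGroup.mk _ = - QuotientAddGroup.mk _
  rw [← QuotientAddGroup.mk_neg, TensorProduct.tmul_neg]

/-- Defining relation. -/
lemma tensorOver.mk_rel (a : A) (r : R) (b : B) :
    tensorOver.mk R ract lact (ract a r) b = tensorOver.mk R ract lact a (lact r b) := by
  show QuotientAddGroup.mk _ = QuotientAddGroup.mk _
  rw [QuotientAddGroup.eq_iff_sub_mem]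
  exact AddSubgroup.subset_closure ⟨a, r, b, rfl⟩

/-- Induction principle. -/
lemma tensorOver.ind {P : tensorOver R ract lact → Prop}
    (hmk : ∀ a b, P (tensorOver.mk R ract lact a b))
    (hadd : ∀ x y, P x → P y → P (x + y)) : ∀ x, P x := by
  intro x
  induction x using QuotientAddGroup.induction_on with
  | _ q =>
    induction q using TensorProduct.induction_on with
    | zero =>
      have := hmk 0 (0 : B)
      rwa [tensorOver.mk_zero_left] at this
    | tmul a b => exact hmk a b
    | add x y hx hy =>
      have := hadd _ _ hx hy
      rwa [← QuotientAddGroup.mk_add] at this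

/-- Lift an additive bi-hom satisfying the balancing condition. -/
noncomputable def tensorOver.lift {C : Type u} [AddCommGroup C]
    (ract : A → R → A) (lact : R → B → B)
    (f : A →+ B →+ C)
    (h : ∀ (a : A) (r : R) (b : B), f (ract a r) b = f a (lact r b)) :
    tensorOver R ract lact →+ C :=
  QuotientAddGroup.lift _
    (TensorProduct.liftAddHom f (fun z a b => by
      simp [map_zsmul]))
    (by
      refine (AddSubgroup.closure_le _).mpr ?_
      rintro x ⟨a, r, b, rfl⟩
      show _ ∈ AddMonoidHom.ker _
      rw [AddMonoidHom.mem_ker, map_sub, TensorProduct.liftAddHom_tmul,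
        TensorProduct.liftAddHom_tmul, h, sub_self])

@[simp] lemma tensorOver.lift_mk {C : Type u} [AddCommGroup C]
    (ract : A → R → A) (lact : R → B → B)
    (f : A →+ B →+ C)
    (h : ∀ (a : A) (r : R) (b : B), f (ract a r) b = f a (lact r b)) (a : A) (b : B) :
    tensorOver.lift ract lact f h (tensorOver.mk R ract lact a b) = f a b := by
  show QuotientAddGroup.lift _ _ _ (QuotientAddGroup.mk _) = _
  rw [QuotientAddGroup.lift_mk]
  exact TensorProduct.liftAddHom_tmul f _ a b

/-- two-variable AddMonoidHom constructor -/
def mkHom2 {A B C : Type u} [AddCommGroup A] [AddCommGroup B] [AddCommGroup C]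
    (f : A → B → C) (h1 : ∀ a a' b, f (a + a') b = f a b + f a' b)
    (h2 : ∀ a b b', f a (b + b') = f a b + f a b') : A →+ B →+ C :=
  AddMonoidHom.mk' (fun a => AddMonoidHom.mk' (f a) (h2 a))
    (fun a a' => AddMonoidHom.ext fun b => h1 a a' b)

@[simp] lemma mkHom2_apply {A B C : Type u} [AddCommGroup A] [AddCommGroup B] [AddCommGroup C]
    (f : A → B → C) (h1) (h2) (a : A) (b : B) : mkHom2 f h1 h2 a b = f a b := rfl

section
variable {R S T : Type u} [Ring R] [Ring S] [Ring T]

/-- `S ⊗_R T`. -/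
noncomputable abbrev TensST (lam : R →+* S) (mu : R →+* T) : Type u :=
  tensorOver R (fun (s : S) (r : R) => s * lam r) (fun (r : R) (t : T) => mu r * t)

/-- The elementary tensor `s ⊗ t` in `S ⊗_R T`. -/
noncomputable def eST (lam : R →+* S) (mu : R →+* T) (s : S) (t : T) : TensST lam mu :=
  tensorOver.mk R _ _ s t

variable (lam : R →+* S) (mu : R →+* T)

lemma eST_add_left (s s' : S) (t : T) :
    eST lam mu (s + s') t = eST lam mu s t + eST lam mu s' t :=
  tensorOver.mk_add_left s s' t

lemma eST_add_right (s : S) (t t' : T) :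
    eST lam mu s (t + t') = eST lam mu s t + eST lam mu s t' :=
  tensorOver.mk_add_right s t t'

lemma eST_zero_left (t : T) : eST lam mu 0 t = 0 := tensorOver.mk_zero_left t
lemma eST_zero_right (s : S) : eST lam mu s 0 = 0 := tensorOver.mk_zero_right s
lemma eST_neg_left (s : S) (t : T) : eST lam mu (-s) t = - eST lam mu s t :=
  tensorOver.mk_neg_left s t
lemma eST_neg_right (s : S) (t : T) : eST lam mu s (-t) = - eST lam mu s t :=
  tensorOver.mk_neg_right s t

lemma eST_rel (s : S) (r : R) (t : T) :
    eST lam mu (s * lam r) t = eST lam mu s (mu r * t) :=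
  tensorOver.mk_rel s r t

lemma eST_rel1 (r : R) : eST lam mu (lam r) 1 = eST lam mu 1 (mu r) := by
  have := eST_rel lam mu 1 r 1
  rwa [one_mul, mul_one] at this

/-- Left multiplication by `s₀` on the first factor. -/
noncomputable def lmul (s₀ : S) : TensST lam mu →+ TensST lam mu :=
  tensorOver.lift _ _
    (mkHom2 (fun s t => eST lam mu (s₀ * s) t)
      (fun s s' t => by
        show eST lam mu (s₀ * (s + s')) t = eST lam mu (s₀ * s) t + eST lam mu (s₀ * s') t
        rw [mul_add, eST_add_left])
      (fun s t t' => by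
        show eST lam mu (s₀ * s) (t + t') = eST lam mu (s₀ * s) t + eST lam mu (s₀ * s) t'
        rw [eST_add_right]))
    (fun s r t => by
      show eST lam mu (s₀ * (s * lam r)) t = eST lam mu (s₀ * s) (mu r * t)
      rw [← mul_assoc, eST_rel])

@[simp] lemma lmul_mk (s₀ s : S) (t : T) :
    lmul lam mu s₀ (eST lam mu s t) = eST lam mu (s₀ * s) t :=
  tensorOver.lift_mk _ _ _ _ s t

/-- Right multiplication by `t₀` on the second factor. -/
noncomputable def rmul (t₀ : T) : TensST lam mu →+ TensST lam mu :=
  tensorOver.lift _ _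
    (mkHom2 (fun s t => eST lam mu s (t * t₀))
      (fun s s' t => by
        show eST lam mu (s + s') (t * t₀) = eST lam mu s (t * t₀) + eST lam mu s' (t * t₀)
        rw [eST_add_left])
      (fun s t t' => by
        show eST lam mu s ((t + t') * t₀) = eST lam mu s (t * t₀) + eST lam mu s (t' * t₀)
        rw [add_mul, eST_add_right]))
    (fun s r t => by
      show eST lam mu (s * lam r) (t * t₀) = eST lam mu s (mu r * t * t₀)
      rw [eST_rel, mul_assoc])

@[simp] lemma rmul_mk (t₀ : T) (s : S) (t : T) :
    rmul lam mu t₀ (eST lam mu s t) = eST lam mu s (t * t₀) :=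
  tensorOver.lift_mk _ _ _ _ s t

lemma lmul_one' (x : TensST lam mu) : lmul lam mu 1 x = x := by
  induction x using tensorOver.ind with
  | hmk s t => rw [show tensorOver.mk R _ _ s t = eST lam mu s t from rfl, lmul_mk, one_mul]
  | hadd x y hx hy => rw [map_add, hx, hy]

lemma rmul_one' (x : TensST lam mu) : rmul lam mu 1 x = x := by
  induction x using tensorOver.ind with
  | hmk s t => rw [show tensorOver.mk R _ _ s t = eST lam mu s t from rfl, rmul_mk, mul_one]
  | hadd x y hx hy => rw [map_add, hx, hy]

lemma lmul_mul' (s₀ s₁ : S) (x : TensST lam mu) :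
    lmul lam mu (s₀ * s₁) x = lmul lam mu s₀ (lmul lam mu s₁ x) := by
  induction x using tensorOver.ind with
  | hmk s t =>
    rw [show tensorOver.mk R _ _ s t = eST lam mu s t from rfl, lmul_mk, lmul_mk, lmul_mk,
      mul_assoc]
  | hadd x y hx hy => rw [map_add, map_add, map_add, hx, hy]

lemma rmul_mul' (t₀ t₁ : T) (x : TensST lam mu) :
    rmul lam mu (t₀ * t₁) x = rmul lam mu t₁ (rmul lam mu t₀ x) := by
  induction x using tensorOver.ind with
  | hmk s t =>
    rw [show tensorOver.mk R _ _ s t = eST lam mu s t from rfl, rmul_mk, rmul_mk, rmul_mk,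
      mul_assoc]
  | hadd x y hx hy => rw [map_add, map_add, map_add, hx, hy]

lemma lmul_rmul' (s₀ : S) (t₀ : T) (x : TensST lam mu) :
    lmul lam mu s₀ (rmul lam mu t₀ x) = rmul lam mu t₀ (lmul lam mu s₀ x) := by
  induction x using tensorOver.ind with
  | hmk s t =>
    rw [show tensorOver.mk R _ _ s t = eST lam mu s t from rfl, rmul_mk, lmul_mk, lmul_mk,
      rmul_mk]
  | hadd x y hx hy => rw [map_add, map_add, map_add, map_add, hx, hy]

lemma lmul_add' (s₀ s₁ : S) (x : TensST lam mu) :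
    lmul lam mu (s₀ + s₁) x = lmul lam mu s₀ x + lmul lam mu s₁ x := by
  induction x using tensorOver.ind with
  | hmk s t =>
    rw [show tensorOver.mk R _ _ s t = eST lam mu s t from rfl, lmul_mk, lmul_mk, lmul_mk,
      add_mul, eST_add_left]
  | hadd x y hx hy => rw [map_add, map_add, map_add, hx, hy]; abel

lemma rmul_add' (t₀ t₁ : T) (x : TensST lam mu) :
    rmul lam mu (t₀ + t₁) x = rmul lam mu t₀ x + rmul lam mu t₁ x := by
  induction x using tensorOver.ind with
  | hmk s t =>
    rw [show tensorOver.mk R _ _ s t = eST lam mu s t from rfl, rmul_mk, rmul_mk, rmul_mk,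
      mul_add, eST_add_right]
  | hadd x y hx hy => rw [map_add, map_add, map_add, hx, hy]; abel

lemma lmul_zero' (x : TensST lam mu) : lmul lam mu 0 x = 0 := by
  induction x using tensorOver.ind with
  | hmk s t =>
    rw [show tensorOver.mk R _ _ s t = eST lam mu s t from rfl, lmul_mk, zero_mul, eST_zero_left]
  | hadd x y hx hy => rw [map_add, hx, hy, add_zero]

lemma rmul_zero' (x : TensST lam mu) : rmul lam mu 0 x = 0 := by
  induction x using tensorOver.ind with
  | hmk s t =>
    rw [show tensorOver.mk R _ _ s t = eST lam mu s t from rfl, rmul_mk, mul_zero, eST_zero_right]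
  | hadd x y hx hy => rw [map_add, hx, hy, add_zero]


/-- Trivial extension `S ⋉ (S ⊗_R S)` used in the epimorphism argument. -/
noncomputable def EpiAux (lam : R →+* S) : Type u := S × TensST lam lam

noncomputable instance EpiAux.addCommGroup (lam : R →+* S) : AddCommGroup (EpiAux lam) :=
  inferInstanceAs (AddCommGroup (S × TensST lam lam))

noncomputable instance EpiAux.ring (lam : R →+* S) : Ring (EpiAux lam) :=
  { EpiAux.addCommGroup lam with
    mul := fun x y => (x.1 * y.1, lmul lam lam x.1 y.2 + rmul lam lam y.1 x.2)
    one := (1, 0)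
    mul_assoc := by
      rintro ⟨a, e⟩ ⟨b, f⟩ ⟨c, g⟩
      refine Prod.ext (mul_assoc a b c) ?_
      show lmul lam lam (a * b) g + rmul lam lam c (lmul lam lam a f + rmul lam lam b e)
        = lmul lam lam a (lmul lam lam b g + rmul lam lam c f) + rmul lam lam (b * c) e
      rw [map_add, map_add, lmul_mul', lmul_rmul', rmul_mul']
      abel
    one_mul := by
      rintro ⟨a, e⟩
      refine Prod.ext (one_mul a) ?_
      show lmul lam lam 1 e + rmul lam lam a 0 = e
      rw [lmul_one', map_zero, add_zero]
    mul_one := by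
      rintro ⟨a, e⟩
      refine Prod.ext (mul_one a) ?_
      show lmul lam lam a 0 + rmul lam lam 1 e = e
      rw [rmul_one', map_zero, zero_add]
    left_distrib := by
      rintro ⟨a, e⟩ ⟨b, f⟩ ⟨c, g⟩
      refine Prod.ext (mul_add a b c) ?_
      show lmul lam lam a (f + g) + rmul lam lam (b + c) e
        = (lmul lam lam a f + rmul lam lam b e) + (lmul lam lam a g + rmul lam lam c e)
      rw [map_add, rmul_add']
      abel
    right_distrib := by
      rintro ⟨a, e⟩ ⟨b, f⟩ ⟨c, g⟩
      refine Prod.ext (add_mul a b c) ?_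
      show lmul lam lam (a + b) g + rmul lam lam c (e + f)
        = (lmul lam lam a g + rmul lam lam c e) + (lmul lam lam b g + rmul lam lam c f)
      rw [map_add, lmul_add']
      abel
    zero_mul := by
      rintro ⟨a, e⟩
      refine Prod.ext (zero_mul a) ?_
      show lmul lam lam 0 e + rmul lam lam a 0 = 0
      rw [lmul_zero', map_zero, add_zero]
    mul_zero := by
      rintro ⟨a, e⟩
      refine Prod.ext (mul_zero a) ?_
      show lmul lam lam a 0 + rmul lam lam 0 e = 0
      rw [rmul_zero', map_zero, add_zero] }

/-- A ring epimorphism `λ : R → S` satisfies `s ⊗ 1 = 1 ⊗ s` in `S ⊗_R S`. -/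
lemma epi_tensor_eq (lam : R →+* S)
    (hepi : ∀ (U : Type u) [Ring U], ∀ f g : S →+* U, f.comp lam = g.comp lam → f = g)
    (s : S) : eST lam lam s 1 = eST lam lam 1 s := by
  let f : S →+* EpiAux lam :=
    { toFun := fun s => (s, eST lam lam s 1 - eST lam lam 1 s)
      map_one' := by
        refine Prod.ext rfl ?_
        show eST lam lam 1 1 - eST lam lam 1 1 = 0
        rw [sub_self]
      map_mul' := by
        intro a b
        refine Prod.ext rfl ?_
        show eST lam lam (a * b) 1 - eST lam lam 1 (a * b)
          = lmul lam lam a (eST lam lam b 1 - eST lam lam 1 b)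
            + rmul lam lam b (eST lam lam a 1 - eST lam lam 1 a)
        rw [map_sub, map_sub, lmul_mk, lmul_mk, rmul_mk, rmul_mk, mul_one, one_mul]
        abel
      map_zero' := by
        refine Prod.ext rfl ?_
        show eST lam lam 0 1 - eST lam lam 1 0 = 0
        rw [eST_zero_left, eST_zero_right, sub_self]
      map_add' := by
        intro a b
        refine Prod.ext rfl ?_
        show eST lam lam (a + b) 1 - eST lam lam 1 (a + b)
          = (eST lam lam a 1 - eST lam lam 1 a) + (eST lam lam b 1 - eST lam lam 1 b)
        rw [eST_add_left, eST_add_right]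
        abel }
  let g : S →+* EpiAux lam :=
    { toFun := fun s => (s, 0)
      map_one' := rfl
      map_mul' := by
        intro a b
        refine Prod.ext rfl ?_
        show lmul lam lam a 0 + rmul lam lam b 0 = 0
        rw [map_zero, map_zero, add_zero]
      map_zero' := rfl
      map_add' := by
        intro a b
        refine Prod.ext rfl ?_
        show (0 : TensST lam lam) = 0 + 0
        rw [add_zero] }
  have hfg : f.comp lam = g.comp lam := by
    ext r
    show (lam r, eST lam lam (lam r) 1 - eST lam lam 1 (lam r)) = (lam r, 0)
    refine Prod.ext rfl ?_
    show eST lam lam (lam r) 1 - eST lam lam 1 (lam r) = 0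
    rw [eST_rel1, sub_self]
  have := hepi (EpiAux lam) f g hfg
  have h2 : f s = g s := by rw [this]
  have := congrArg Prod.snd h2
  have h3 : eST lam lam s 1 - eST lam lam 1 s = 0 := this
  exact sub_eq_zero.mp h3


lemma eST_sub_left (lam : R →+* S) (mu : R →+* T) (s s' : S) (t : T) :
    eST lam mu (s - s') t = eST lam mu s t - eST lam mu s' t := by
  rw [sub_eq_add_neg, eST_add_left, eST_neg_left, sub_eq_add_neg]

lemma eST_sub_right (lam : R →+* S) (mu : R →+* T) (s : S) (t t' : T) :
    eST lam mu s (t - t') = eST lam mu s t - eST lam mu s t' := by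
  rw [sub_eq_add_neg, eST_add_right, eST_neg_right, sub_eq_add_neg]


/-- `(λ, μ, M, m)` is an exact context. -/
def IsExactContext {M : Type u} [AddCommGroup M] [Module S M] [Module Tᵐᵒᵖ M]
    (lam : R →+* S) (mu : R →+* T) (m : M) : Prop :=
  Function.Injective (fun r : R => (lam r, mu r)) ∧
  (∀ (s : S) (t : T), s • m = op t • m ↔ ∃ r : R, lam r = s ∧ mu r = t) ∧
  (∀ x : M, ∃ (s : S) (t : T), x = s • m - op t • m)

/-- `(λ, μ)` is an exact pair: `(λ, μ, S ⊗_R T, 1 ⊗ 1)` is an exact context. -/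
noncomputable def IsExactPair (lam : R →+* S) (mu : R →+* T) : Prop :=
  Function.Injective (fun r : R => (lam r, mu r)) ∧
  (∀ (s : S) (t : T), eST lam mu s 1 = eST lam mu 1 t ↔ ∃ r : R, lam r = s ∧ mu r = t) ∧
  (∀ x : TensST lam mu, ∃ (s : S) (t : T), x = eST lam mu s 1 - eST lam mu 1 t)

/-- Let `(λ, μ, M, m)` be an exact context.  If `λ` or `μ` is a ring
epimorphism, then `γ : S ⊗_R T → M`, `s ⊗ t ↦ s·m·t`, is an isomorphism of
`(S,T)`-bimodules; in particular `(λ, μ)` is an exact pair. -/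
theorem stmt3 {M : Type u} [AddCommGroup M] [Module S M] [Module Tᵐᵒᵖ M]
    [SMulCommClass S Tᵐᵒᵖ M]
    (lam : R →+* S) (mu : R →+* T) (m : M)
    (hEC : IsExactContext lam mu m)
    (γ : TensST lam mu →+ M)
    (hγ : ∀ (s : S) (t : T), γ (eST lam mu s t) = s • (op t • m))
    (hepi : (∀ (U : Type u) [Ring U], ∀ f g : S →+* U, f.comp lam = g.comp lam → f = g) ∨
            (∀ (U : Type u) [Ring U], ∀ f g : T →+* U, f.comp mu = g.comp mu → f = g)) :
    Function.Bijective γ ∧ IsExactPair lam mu := by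
  obtain ⟨hinj, hmid, hsurj⟩ := hEC
  choose sOf tOf hx using hsurj
  -- the candidate inverse map
  set δ : M → TensST lam mu :=
    fun x => eST lam mu (sOf x) 1 - eST lam mu 1 (tOf x) with hδdef
  -- well-definedness
  have hwd : ∀ (x : M) (s : S) (t : T), x = s • m - op t • m →
      δ x = eST lam mu s 1 - eST lam mu 1 t := by
    intro x s t hxst
    have h1 : (sOf x - s) • m = op (tOf x - t) • m := by
      rw [sub_smul, op_sub, sub_smul]
      have h0 : sOf x • m - op (tOf x) • m = s • m - op t • m := by
        rw [← hx x, ← hxst]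
      rwa [sub_eq_sub_iff_sub_eq_sub] at h0
    obtain ⟨r, hr1, hr2⟩ := (hmid _ _).mp h1
    have e1 : eST lam mu (sOf x - s) 1 = eST lam mu 1 (tOf x - t) := by
      rw [← hr1, ← hr2, eST_rel1]
    rw [eST_sub_left, eST_sub_right] at e1
    show eST lam mu (sOf x) 1 - eST lam mu 1 (tOf x) = eST lam mu s 1 - eST lam mu 1 t
    rw [sub_eq_sub_iff_sub_eq_sub]
    exact e1
  have hδadd : ∀ x y, δ (x + y) = δ x + δ y := by
    intro x y
    have hxy : x + y = (sOf x + sOf y) • m - op (tOf x + tOf y) • m := by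
      rw [add_smul, op_add, add_smul]
      calc x + y = (sOf x • m - op (tOf x) • m) + (sOf y • m - op (tOf y) • m) := by
            rw [← hx x, ← hx y]
        _ = _ := by abel
    rw [hwd _ _ _ hxy, eST_add_left, eST_add_right]
    show _ = (eST lam mu (sOf x) 1 - eST lam mu 1 (tOf x))
      + (eST lam mu (sOf y) 1 - eST lam mu 1 (tOf y))
    abel
  set Δ : M →+ TensST lam mu := AddMonoidHom.mk' δ hδadd with hΔdef
  have hΔwd : ∀ (x : M) (s : S) (t : T), x = s • m - op t • m →
      Δ x = eST lam mu s 1 - eST lam mu 1 t := hwd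
  have hΔsm : ∀ s : S, Δ (s • m) = eST lam mu s 1 := by
    intro s
    have := hΔwd (s • m) s 0 (by rw [op_zero, zero_smul, sub_zero])
    rwa [eST_zero_right, sub_zero] at this
  have hΔmt : ∀ t : T, Δ (op t • m) = eST lam mu 1 t := by
    intro t
    have := hΔwd (op t • m) 0 (-t) (by rw [op_neg, neg_smul, zero_smul, zero_sub, neg_neg])
    rwa [eST_zero_left, eST_neg_right, zero_sub, neg_neg] at this
  have hm_rel : ∀ r : R, lam r • m = op (mu r) • m := fun r => (hmid _ _).mpr ⟨r, rfl, rfl⟩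
  -- the key identity, proved separately in the two epi cases
  have hKEY : ∀ (s : S) (t : T), Δ (s • (op t • m)) = eST lam mu s t := by
    rcases hepi with hS | hT
    · -- λ is an epimorphism
      have hDlam : ∀ (r : R) (x : M), Δ (lam r • x) = lmul lam mu (lam r) (Δ x) := by
        intro r x
        have hx' : lam r • x = (lam r * sOf x) • m - op (mu r * tOf x) • m := by
          conv_lhs => rw [hx x]
          rw [smul_sub, smul_smul, smul_comm (lam r) (op (tOf x)) m, hm_rel r,
            smul_smul, ← op_mul]
        rw [hΔwd _ _ _ hx']
        have : Δ x = eST lam mu (sOf x) 1 - eST lam mu 1 (tOf x) := rfl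
        rw [this, map_sub, lmul_mk, lmul_mk, mul_one]
        have e2 : eST lam mu (lam r) (tOf x) = eST lam mu 1 (mu r * tOf x) := by
          have := eST_rel lam mu 1 r (tOf x)
          rwa [one_mul] at this
        rw [e2]
      intro s t
      have hSS := epi_tensor_eq lam hS s
      let Φ : TensST lam lam →+ TensST lam mu := tensorOver.lift _ _
        (mkHom2 (fun a b => lmul lam mu a (Δ (b • (op t • m))))
          (fun a a' b => by
            show lmul lam mu (a + a') (Δ (b • (op t • m))) = _
            rw [lmul_add'])
          (fun a b b' => by
            show lmul lam mu a (Δ ((b + b') • (op t • m))) = _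
            rw [add_smul, map_add, map_add]))
        (fun a r b => by
          show lmul lam mu (a * lam r) (Δ (b • (op t • m)))
            = lmul lam mu a (Δ ((lam r * b) • (op t • m)))
          rw [lmul_mul', mul_smul, hDlam])
      have hc := congrArg Φ hSS
      have hL : Φ (eST lam lam s 1) = eST lam mu s t := by
        show tensorOver.lift _ _ _ _ (tensorOver.mk R _ _ s (1 : S)) = _
        rw [tensorOver.lift_mk, mkHom2_apply, one_smul, hΔmt, lmul_mk, mul_one]
      have hR : Φ (eST lam lam 1 s) = Δ (s • (op t • m)) := by
        show tensorOver.lift _ _ _ _ (tensorOver.mk R _ _ (1 : S) s) = _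
        rw [tensorOver.lift_mk, mkHom2_apply, lmul_one']
      rw [hL, hR] at hc
      exact hc.symm
    · -- μ is an epimorphism
      have hDmu : ∀ (r : R) (x : M), Δ (op (mu r) • x) = rmul lam mu (mu r) (Δ x) := by
        intro r x
        have hx' : op (mu r) • x = (sOf x * lam r) • m - op (tOf x * mu r) • m := by
          conv_lhs => rw [hx x]
          rw [smul_sub, ← smul_comm (sOf x) (op (mu r)) m, ← hm_rel r, smul_smul,
            smul_smul, ← op_mul]
        rw [hΔwd _ _ _ hx']
        have : Δ x = eST lam mu (sOf x) 1 - eST lam mu 1 (tOf x) := rfl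
        rw [this, map_sub, rmul_mk, rmul_mk, one_mul]
        have e2 : eST lam mu (sOf x * lam r) 1 = eST lam mu (sOf x) (mu r) := by
          have := eST_rel lam mu (sOf x) r 1
          rwa [mul_one] at this
        rw [e2]
      intro s t
      have hTT := epi_tensor_eq mu hT t
      let Φ : TensST mu mu →+ TensST lam mu := tensorOver.lift _ _
        (mkHom2 (fun a b => rmul lam mu b (Δ (op a • (s • m))))
          (fun a a' b => by
            show rmul lam mu b (Δ (op (a + a') • (s • m))) = _
            rw [op_add, add_smul, map_add, map_add])
          (fun a b b' => by
            show rmul lam mu (b + b') (Δ (op a • (s • m))) = _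
            rw [rmul_add']))
        (fun a r b => by
          show rmul lam mu b (Δ (op (a * mu r) • (s • m)))
            = rmul lam mu (mu r * b) (Δ (op a • (s • m)))
          rw [op_mul, mul_smul, hDmu, rmul_mul'])
      have hc := congrArg Φ hTT
      have hL : Φ (eST mu mu t 1) = Δ (s • (op t • m)) := by
        show tensorOver.lift _ _ _ _ (tensorOver.mk R _ _ t (1 : T)) = _
        rw [tensorOver.lift_mk, mkHom2_apply, rmul_one', ← smul_comm s (op t) m]
      have hR : Φ (eST mu mu 1 t) = eST lam mu s t := by
        show tensorOver.lift _ _ _ _ (tensorOver.mk R _ _ (1 : T) t) = _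
        rw [tensorOver.lift_mk, mkHom2_apply, op_one, one_smul, hΔsm, rmul_mk, one_mul]
      rw [hL, hR] at hc
      exact hc
  -- Δ is a retraction of γ
  have hDg : ∀ x : TensST lam mu, Δ (γ x) = x := by
    intro x
    induction x using tensorOver.ind with
    | hmk s t =>
      have h1 : tensorOver.mk R _ _ s t = eST lam mu s t := rfl
      rw [h1, hγ, hKEY]
    | hadd x y hX hY => rw [map_add, map_add, hX, hY]
  have hγinj : Function.Injective γ := by
    intro a b h
    rw [← hDg a, ← hDg b, h]
  have hγsurj : Function.Surjective γ := by
    intro x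
    refine ⟨eST lam mu (sOf x) 1 - eST lam mu 1 (tOf x), ?_⟩
    rw [map_sub, hγ, hγ, op_one, one_smul, one_smul, ← hx x]
  refine ⟨⟨hγinj, hγsurj⟩, hinj, fun s t => ⟨?_, ?_⟩, fun x => ⟨sOf (γ x), tOf (γ x), ?_⟩⟩
  · intro h
    have := congrArg γ h
    rw [hγ, hγ, op_one, one_smul, one_smul] at this
    exact (hmid s t).mp this
  · rintro ⟨r, hr1, hr2⟩
    rw [← hr1, ← hr2, eST_rel1]
  · have := hDg x
    rw [hΔwd (γ x) (sOf (γ x)) (tOf (γ x)) (hx (γ x))] at this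
    exact this.symm


end
end API
end

section
/- Let (λ, μ, M, m) be an exact context and T ⊠_R S its noncommutative tensor product. Then the map β: M → T ⊠_R S, sending x = s_x m + m t_x to 1 ⊗ s_x + t_x ⊗ 1, is a homomorphism of (S,T)-bimodules with β(m) = 1 ⊗ 1, where T ⊠_R S is viewed as an (S,T)-bimodule via the ring homomorphisms ρ: S → T ⊠_R S, s ↦ 1 ⊗ s, and φ: T → T ⊠_R S, t ↦ t ⊗ 1. -/
open MulOpposite
open scoped TensorProduct

universe u

section
variable {R S T : Type u} [Ring R] [Ring S] [Ring T]

/-- `T ⊗_R S`, where `T` is a right `R`-module via `μ` and `S` a left `R`-module via `λ`. -/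
noncomputable abbrev TensTS (lam : R →+* S) (mu : R →+* T) : Type u :=
  tensorOver R (fun (t : T) (r : R) => t * mu r) (fun (r : R) (s : S) => lam r * s)

/-- The elementary tensor `t ⊗ s` in `T ⊗_R S`. -/
noncomputable def eTS (lam : R →+* S) (mu : R →+* T) (t : T) (s : S) : TensTS lam mu :=
  QuotientAddGroup.mk (t ⊗ₜ[ℤ] s)

section auxET
variable (lam : R →+* S) (mu : R →+* T)

lemma eTS_add_left (t t' : T) (s : S) :
    eTS lam mu (t + t') s = eTS lam mu t s + eTS lam mu t' s := by
  simp only [eTS, TensorProduct.add_tmul]; rfl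

lemma eTS_add_right (t : T) (s s' : S) :
    eTS lam mu t (s + s') = eTS lam mu t s + eTS lam mu t s' := by
  simp only [eTS, TensorProduct.tmul_add]; rfl

lemma eTS_zero_left (s : S) : eTS lam mu 0 s = 0 := by
  simp only [eTS, TensorProduct.zero_tmul]; rfl

lemma eTS_zero_right (t : T) : eTS lam mu t 0 = 0 := by
  simp only [eTS, TensorProduct.tmul_zero]; rfl

lemma eTS_neg_left (t : T) (s : S) : eTS lam mu (-t) s = -eTS lam mu t s := by
  have h := eTS_add_left lam mu t (-t) s
  rw [add_neg_cancel, eTS_zero_left] at h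
  exact (neg_eq_of_add_eq_zero_right h.symm).symm

lemma eTS_neg_right (t : T) (s : S) : eTS lam mu t (-s) = -eTS lam mu t s := by
  have h := eTS_add_right lam mu t s (-s)
  rw [add_neg_cancel, eTS_zero_right] at h
  exact (neg_eq_of_add_eq_zero_right h.symm).symm

lemma eTS_sub_left (t t' : T) (s : S) :
    eTS lam mu (t - t') s = eTS lam mu t s - eTS lam mu t' s := by
  rw [sub_eq_add_neg, eTS_add_left, eTS_neg_left, sub_eq_add_neg]

lemma eTS_sub_right (t : T) (s s' : S) :
    eTS lam mu t (s - s') = eTS lam mu t s - eTS lam mu t s' := by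
  rw [sub_eq_add_neg, eTS_add_right, eTS_neg_right, sub_eq_add_neg]

lemma eTS_key (t : T) (r : R) : eTS lam mu (t * mu r) 1 = eTS lam mu t (lam r) := by
  unfold eTS
  rw [QuotientAddGroup.eq]
  have h : (-((t * mu r) ⊗ₜ[ℤ] (1:S)) + t ⊗ₜ[ℤ] lam r)
      = -((t * mu r) ⊗ₜ[ℤ] (1:S) - t ⊗ₜ[ℤ] (lam r * 1)) := by
    rw [mul_one]; abel
  rw [h]
  exact neg_mem (AddSubgroup.subset_closure ⟨t, r, 1, rfl⟩)

end auxET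

/-- For an exact context `(λ, μ, M, m)` with noncommutative tensor
product `T ⊠_R S` (multiplication `mul` characterized as in the paper), the map
`β : M → T ⊠_R S` sending `x = s_x·m + m·t_x` to `1 ⊗ s_x + t_x ⊗ 1` is a
well-defined homomorphism of `(S,T)`-bimodules with `β(m) = 1 ⊗ 1`, where
`T ⊠_R S` is an `(S,T)`-bimodule via `ρ : s ↦ 1 ⊗ s` and `φ : t ↦ t ⊗ 1`. -/
theorem stmt6 {M : Type u} [AddCommGroup M] [Module S M] [Module Tᵐᵒᵖ M]
    [SMulCommClass S Tᵐᵒᵖ M]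
    (lam : R →+* S) (mu : R →+* T) (m : M)
    (hEC : IsExactContext lam mu m)
    (mul : TensTS lam mu → TensTS lam mu → TensTS lam mu)
    (hdl : ∀ x y z : TensTS lam mu, mul (x + y) z = mul x z + mul y z)
    (hdr : ∀ x y z : TensTS lam mu, mul x (y + z) = mul x y + mul x z)
    (hchar : ∀ (t₁ : T) (s₁ : S) (t₂ : T) (s₂ : S) (u : S) (v : T),
        s₁ • (op t₂ • m) = u • m + op v • m →
        mul (eTS lam mu t₁ s₁) (eTS lam mu t₂ s₂) =
          eTS lam mu t₁ (u * s₂) + eTS lam mu (t₁ * v) s₂) :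
    ∃ β : M →+ TensTS lam mu,
      (∀ (x : M) (s : S) (t : T), x = s • m + op t • m →
        β x = eTS lam mu 1 s + eTS lam mu t 1) ∧
      β m = eTS lam mu 1 1 ∧
      (∀ (s : S) (x : M), β (s • x) = mul (eTS lam mu 1 s) (β x)) ∧
      (∀ (t : T) (x : M), β (op t • x) = mul (β x) (eTS lam mu t 1)) := by
  classical
  obtain ⟨hinj, hiff, hgen⟩ := hEC
  choose sf tf hrep using hgen
  set b : M → TensTS lam mu := fun x => eTS lam mu 1 (sf x) - eTS lam mu (tf x) 1 with hb
  -- well-definedness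
  have wd : ∀ (x : M) (s : S) (t : T), x = s • m - op t • m →
      b x = eTS lam mu 1 s - eTS lam mu t 1 := by
    intro x s t hx
    have h1 : (s - sf x) • m = op (t - tf x) • m := by
      have H := (hrep x).symm.trans hx
      rw [sub_smul, op_sub, sub_smul, ← sub_eq_zero]
      calc s • m - sf x • m - (op t • m - op (tf x) • m)
          = (s • m - op t • m) - (sf x • m - op (tf x) • m) := by abel
        _ = 0 := by rw [H, sub_self]
    obtain ⟨r, hr1, hr2⟩ := (hiff _ _).mp h1
    have hkey : eTS lam mu 1 (s - sf x) = eTS lam mu (t - tf x) 1 := by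
      rw [← hr1, ← hr2, ← eTS_key lam mu 1 r, one_mul]
    rw [eTS_sub_right, eTS_sub_left] at hkey
    simp only [hb]
    rw [← sub_eq_zero]
    calc eTS lam mu 1 (sf x) - eTS lam mu (tf x) 1 - (eTS lam mu 1 s - eTS lam mu t 1)
        = -((eTS lam mu 1 s - eTS lam mu 1 (sf x)) - (eTS lam mu t 1 - eTS lam mu (tf x) 1)) := by
          abel
      _ = 0 := by rw [hkey, sub_self, neg_zero]
  -- additivity
  have hadd : ∀ x y, b (x + y) = b x + b y := by
    intro x y
    have hxy : x + y = (sf x + sf y) • m - op (tf x + tf y) • m := by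
      conv_lhs => rw [hrep x, hrep y]
      rw [add_smul, op_add, add_smul]; abel
    rw [wd _ _ _ hxy, eTS_add_right, eTS_add_left]
    simp only [hb]
    abel
  refine ⟨AddMonoidHom.mk' b hadd, ?_, ?_, ?_, ?_⟩
  · -- the defining property with +
    intro x s t hx
    have hx' : x = s • m - op (-t) • m := by
      rw [op_neg, neg_smul, sub_neg_eq_add, hx]
    rw [AddMonoidHom.mk'_apply, wd _ _ _ hx', eTS_neg_left, sub_neg_eq_add]
  · -- β m = 1 ⊗ 1
    have hm : m = (1 : S) • m - op (0 : T) • m := by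
      rw [one_smul, op_zero, zero_smul, sub_zero]
    rw [AddMonoidHom.mk'_apply, wd _ _ _ hm, eTS_zero_left, sub_zero]
  · -- S-linearity
    intro s x
    obtain ⟨u, v, huv⟩ : ∃ u v, s • (op (tf x) • m) = u • m - op v • m :=
      ⟨_, _, hrep _⟩
    have hrepr : s • x = (s * sf x - u) • m - op (-v) • m := by
      conv_lhs => rw [hrep x]
      rw [smul_sub, huv, ← mul_smul, sub_smul, op_neg, neg_smul]
      abel
    have hA : s • (op (1:T) • m) = s • m + op (0:T) • m := by
      simp
    have A := hchar 1 s 1 (sf x) s 0 hA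
    rw [mul_zero, eTS_zero_left, add_zero] at A
    have hB : s • (op (tf x) • m) = u • m + op (-v) • m := by
      rw [huv, op_neg, neg_smul, sub_eq_add_neg]
    have B := hchar 1 s (tf x) 1 u (-v) hB
    rw [mul_one, one_mul, eTS_neg_left] at B
    have hbx : b x = eTS lam mu 1 (sf x) - eTS lam mu (tf x) 1 := rfl
    have msubR : ∀ p q r : TensTS lam mu, mul p (q - r) = mul p q - mul p r := by
      intro p q r
      have h := hdr p (q - r) r
      rw [sub_add_cancel] at h
      exact eq_sub_of_add_eq h.symm
    show b (s • x) = mul (eTS lam mu 1 s) (b x)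
    rw [wd _ _ _ hrepr, hbx,
      msubR, A, B, eTS_sub_right, eTS_neg_left]
    abel
  · -- T-linearity
    intro t x
    obtain ⟨u, v, huv⟩ : ∃ u v, sf x • (op t • m) = u • m - op v • m :=
      ⟨_, _, hrep _⟩
    obtain ⟨u', v', huv'⟩ : ∃ u v, (op t • m : M) = u • m - op v • m :=
      ⟨_, _, hrep _⟩
    have hrepr : op t • x = u • m - op (v + tf x * t) • m := by
      conv_lhs => rw [hrep x]
      rw [smul_sub, ← smul_comm (sf x) (op t) m, huv, ← mul_smul, ← op_mul,
        op_add, add_smul]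
      abel
    have hA : sf x • (op t • m) = u • m + op (-v) • m := by
      rw [huv, op_neg, neg_smul, sub_eq_add_neg]
    have A := hchar 1 (sf x) t 1 u (-v) hA
    rw [mul_one, one_mul, eTS_neg_left] at A
    have hB : (1 : S) • (op t • m) = u' • m + op (-v') • m := by
      rw [one_smul, huv', op_neg, neg_smul, sub_eq_add_neg]
    have B := hchar (tf x) 1 t 1 u' (-v') hB
    rw [mul_one] at B
    have h1 : u' • m = op (t + v') • m := by
      rw [op_add, add_smul, huv']
      abel
    obtain ⟨r, hr1, hr2⟩ := (hiff _ _).mp h1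
    have hrel : eTS lam mu (tf x) u' = eTS lam mu (tf x * t) 1 + eTS lam mu (tf x * v') 1 := by
      rw [← hr1, ← eTS_key lam mu (tf x) r, hr2, mul_add, eTS_add_left]
    have hbx : b x = eTS lam mu 1 (sf x) - eTS lam mu (tf x) 1 := rfl
    have msubL : ∀ p q r : TensTS lam mu, mul (p - q) r = mul p r - mul q r := by
      intro p q r
      have h := hdl (p - q) q r
      rw [sub_add_cancel] at h
      exact eq_sub_of_add_eq h.symm
    show b (op t • x) = mul (b x) (eTS lam mu t 1)
    rw [wd _ _ _ hrepr, hbx,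
      msubL, A, B, hrel, eTS_add_left]
    rw [mul_neg, eTS_neg_left]
    abel

end
end
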